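/- arXiv:2503.13312 — 2 statements merged into one kernel-verified Lean document; each statement's English description precedes it below -/
import Mathlib

section
/- Let A be a topological ring, Γ and Δ linearly ordered commutative groups with zero, v : A → Γ a continuous valuation, and φ : Γ → Δ a quotient by a convex subgroup. Set w = φ ∘ v (a vertical generalization of v). Then w is continuous if and only if w(a) < 1 for every topologically nilpotent a ∈ A. (Lemma 3.3, main characterization.) -/
/-- An element of a topological ring is topologically nilpotent if its powers tend to zero. -/
def IsTopologicallyNilpotentElem {A : Type*} [Ring A] [TopologicalSpace A] (a : A) : Prop :=
  Filter.Tendsto (fun n : ℕ => a ^ n) Filter.atTop (nhds 0)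

/-- The value group of a `Γ`-valued function on `A`: the subgroup of `Γˣ` generated by the
nonzero values. -/
def valueGroupOf {A : Type*} {Γ : Type*} [LinearOrderedCommGroupWithZero Γ]
    (f : A → Γ) : Subgroup Γˣ :=
  Subgroup.closure {γ : Γˣ | ∃ a : A, f a = (γ : Γ)}

/-- Huber's characterization of continuity for valuations on Huber rings
([Hu93], Theorem 3.1). -/
def IsHuberContinuous {A : Type*} [Ring A] [TopologicalSpace A] {Γ : Type*}
    [LinearOrderedCommGroupWithZero Γ] (f : A → Γ) : Prop :=
  ∀ a : A, IsTopologicallyNilpotentElem a → ∀ γ ∈ valueGroupOf f, ∃ n : ℕ, f a ^ n < (γ : Γ)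

/-- A monoid-with-zero homomorphism `φ : Γ → Δ` is a quotient by a convex subgroup if
`φ x = 0 ↔ x = 0` and `φ x < φ y ↔ (x·h < y for all h with φ h = 1)`. -/
def IsQuotientByConvexSubgroup {Γ Δ : Type*} [LinearOrderedCommGroupWithZero Γ]
    [LinearOrderedCommGroupWithZero Δ] (φ : Γ →*₀ Δ) : Prop :=
  (∀ x : Γ, φ x = 0 ↔ x = 0) ∧
  (∀ x y : Γ, φ x < φ y ↔ ∀ h : Γ, φ h = 1 → x * h < y)

/-- A vertical generalization `w = φ ∘ v` of a continuous valuation `v` is continuous if and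
only if `w(a) < 1` for every topologically nilpotent `a`. -/
theorem vertical_generalization_continuous_iff
    {A : Type*} [Ring A] [TopologicalSpace A]
    {Γ Δ : Type*} [LinearOrderedCommGroupWithZero Γ] [LinearOrderedCommGroupWithZero Δ]
    (v : Valuation A Γ) (hv : IsHuberContinuous (⇑v))
    (φ : Γ →*₀ Δ) (hφ : IsQuotientByConvexSubgroup φ) :
    IsHuberContinuous (fun a : A => φ (v a)) ↔
      ∀ a : A, IsTopologicallyNilpotentElem a → φ (v a) < 1 := by
  constructor
  · intro hw a ha
    obtain ⟨n, hn⟩ := hw a ha 1 (Subgroup.one_mem _)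
    simp only [Units.val_one] at hn
    by_contra hle
    push_neg at hle
    exact absurd hn (not_lt.2 (one_le_pow_of_one_le' hle n))
  · intro h1 a ha γ hγ
    by_cases hva : v a = 0
    · refine ⟨1, ?_⟩
      simp only [hva, map_zero, pow_one, (hφ.1 (0 : Γ)).2 rfl]
      exact Units.zero_lt γ
    -- lift γ to the value group of v
    have hle : valueGroupOf (fun a : A => φ (v a)) ≤
        Subgroup.map (Units.map φ.toMonoidHom) (valueGroupOf (⇑v)) := by
      refine (Subgroup.closure_le _).2 ?_
      rintro δ ⟨b, hb⟩
      have hvb : v b ≠ 0 := by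
        intro h0
        simp only [h0, map_zero] at hb
        exact δ.ne_zero hb.symm
      refine ⟨Units.mk0 (v b) hvb, Subgroup.subset_closure ⟨b, rfl⟩, ?_⟩
      ext
      simpa using hb
    obtain ⟨g, hg, hψ⟩ := hle hγ
    have hφg : φ (g : Γ) = (γ : Δ) := by
      have := congrArg Units.val hψ
      simpa using this
    have hlt1 : φ (v a) < φ 1 := by
      rw [map_one]; exact h1 a ha
    have h2 : ∀ h : Γ, φ h = 1 → v a * h < 1 := (hφ.2 (v a) 1).1 hlt1
    obtain ⟨n, hn⟩ := hv a ha g hg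
    refine ⟨n + 1, ?_⟩
    show φ (v a) ^ (n + 1) < (γ : Δ)
    rw [← map_pow, ← hφg]
    refine (hφ.2 _ _).2 fun h hh => ?_
    calc v a ^ (n + 1) * h = v a ^ n * (v a * h) := by rw [pow_succ, mul_assoc]
      _ ≤ v a ^ n * 1 := mul_le_mul_right (le_of_lt (h2 h hh)) _
      _ = v a ^ n := mul_one _
      _ < (g : Γ) := hn
end

section
/- Let A be a topological ring, Γ and Δ linearly ordered commutative groups with zero, v : A → Γ a continuous valuation, and φ : Γ → Δ a quotient by a convex subgroup. Assume v is analytic, i.e. there exists a topologically nilpotent a ∈ A with v(a) ≠ 0. Then the vertical generalization w = φ ∘ v is continuous if and only if w is a nontrivial valuation, i.e. there exists b ∈ A with w(b) ≠ 0 and w(b) ≠ 1. (Lemma 3.3, analytic case.) -/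
section Aux

variable {Γ Δ : Type*} [LinearOrderedCommGroupWithZero Γ] [LinearOrderedCommGroupWithZero Δ]

theorem mul_lt_mul_of_lt_of_le₀ {M : Type*} [LinearOrderedCommGroupWithZero M] {a b c d : M}
    (hab : a ≤ b) (hb : b ≠ 0) (hcd : c < d) : a * c < b * d :=
  lt_of_le_of_lt (mul_le_mul_of_nonneg_right hab zero_le') (mul_lt_mul_of_pos_left hcd (zero_lt_iff.mpr hb))

theorem IsQuotientByConvexSubgroup.monotone {φ : Γ →*₀ Δ}
    (hφ : IsQuotientByConvexSubgroup φ) {x y : Γ} (hxy : x ≤ y) : φ x ≤ φ y := by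
  by_contra h
  have := (hφ.2 y x).mp (lt_of_not_ge h) 1 (map_one φ)
  rw [mul_one] at this
  exact absurd hxy (not_le_of_gt this)

/-- Every element of the value group of `φ ∘ v` lifts to an element of the value group of `v`. -/
theorem valueGroup_lift {A : Type*} (v : A → Γ) (φ : Γ →*₀ Δ)
    (hφ0 : ∀ x : Γ, φ x = 0 ↔ x = 0)
    {γ : Δˣ} (hγ : γ ∈ valueGroupOf (fun a : A => φ (v a))) :
    ∃ δ : Γˣ, δ ∈ valueGroupOf v ∧ φ (δ : Γ) = (γ : Δ) := by
  induction hγ using Subgroup.closure_induction with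
  | mem x hx =>
    obtain ⟨a, ha⟩ := hx
    replace ha : φ (v a) = (x : Δ) := ha
    have hva : v a ≠ 0 := by
      intro h
      rw [h, map_zero] at ha
      exact x.ne_zero ha.symm
    refine ⟨Units.mk0 (v a) hva, Subgroup.subset_closure ⟨a, rfl⟩, ha⟩
  | one => exact ⟨1, one_mem _, by simp⟩
  | mul x y hx hy ihx ihy =>
    obtain ⟨δ₁, hδ₁, h1⟩ := ihx
    obtain ⟨δ₂, hδ₂, h2⟩ := ihy
    exact ⟨δ₁ * δ₂, mul_mem hδ₁ hδ₂, by rw [Units.val_mul, map_mul, h1, h2, Units.val_mul]⟩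
  | inv x hx ihx =>
    obtain ⟨δ, hδ, h1⟩ := ihx
    refine ⟨δ⁻¹, inv_mem hδ, ?_⟩
    have hinv : φ ((δ⁻¹ : Γˣ) : Γ) * φ (δ : Γ) = 1 := by
      rw [← map_mul]
      norm_cast
      simp
    rw [h1] at hinv
    simpa [Units.val_inv_eq_inv_val] using eq_inv_of_mul_eq_one_left hinv

end Aux

/-- If `v` is continuous and analytic (some topologically nilpotent element has nonzero value),
then the vertical generalization `w = φ ∘ v` is continuous if and only if it is a nontrivial
valuation. -/
theorem vertical_generalization_continuous_iff_nontrivial_of_analytic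
    {A : Type*} [Ring A] [TopologicalSpace A]
    {Γ Δ : Type*} [LinearOrderedCommGroupWithZero Γ] [LinearOrderedCommGroupWithZero Δ]
    (v : Valuation A Γ) (hv : IsHuberContinuous (⇑v))
    (φ : Γ →*₀ Δ) (hφ : IsQuotientByConvexSubgroup φ)
    (han : ∃ a : A, IsTopologicallyNilpotentElem a ∧ v a ≠ 0) :
    IsHuberContinuous (fun a : A => φ (v a)) ↔
      ∃ b : A, φ (v b) ≠ 0 ∧ φ (v b) ≠ 1 := by
  constructor
  · intro hw
    obtain ⟨a, hatn, hva⟩ := han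
    obtain ⟨n, hn⟩ := hw a hatn 1 (one_mem _)
    replace hn : φ (v a) ^ n < 1 := by simpa using hn
    have hwa : φ (v a) ≠ 0 := fun h => hva ((hφ.1 (v a)).mp h)
    refine ⟨a ^ n, ?_, ?_⟩
    · rw [map_pow, map_pow]
      exact pow_ne_zero n hwa
    · rw [map_pow, map_pow]
      exact ne_of_lt hn
  · intro ⟨b, hb0, hb1⟩
    -- Key fact: every topologically nilpotent element with nonzero value has `φ (v c) < 1`.
    have key : ∀ c : A, IsTopologicallyNilpotentElem c → v c ≠ 0 → φ (v c) < 1 := by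
      intro c hc hvc
      -- find β in the value group of v with φ β < 1
      have hvb : v b ≠ 0 := fun h => hb0 (by rw [h, map_zero])
      set u : Γˣ := Units.mk0 (v b) hvb with hu
      have hum : u ∈ valueGroupOf (⇑v) := Subgroup.subset_closure ⟨b, rfl⟩
      have hφu : φ (u : Γ) ≠ 0 := hb0
      have hφu1 : φ (u : Γ) ≠ 1 := hb1
      obtain ⟨β, hβm, hβlt⟩ : ∃ β : Γˣ, β ∈ valueGroupOf (⇑v) ∧ φ (β : Γ) < 1 := by
        rcases lt_or_gt_of_ne hφu1 with h | h
        · exact ⟨u, hum, h⟩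
        · refine ⟨u⁻¹, inv_mem hum, ?_⟩
          have hinv : φ ((u⁻¹ : Γˣ) : Γ) * φ (u : Γ) = 1 := by
            rw [← map_mul]; norm_cast; simp
          by_contra hle
          have h1le : (1 : Δ) ≤ φ ((u⁻¹ : Γˣ) : Γ) := le_of_not_gt hle
          have hne : φ ((u⁻¹ : Γˣ) : Γ) ≠ 0 := by
            intro hz
            rw [hz, zero_mul] at hinv
            exact zero_ne_one hinv
          have hlt : (1 : Δ) * 1 < φ ((u⁻¹ : Γˣ) : Γ) * φ (u : Γ) :=
            mul_lt_mul_of_lt_of_le₀ h1le hne h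
          rw [hinv, one_mul] at hlt
          exact lt_irrefl _ hlt
      obtain ⟨n, hn⟩ := hv c hc β hβm
      have hφn : φ (v c) ^ n < 1 := by
        rw [← map_pow]
        calc φ ((v c) ^ n) ≤ φ (β : Γ) := hφ.monotone (le_of_lt hn)
        _ < 1 := hβlt
      by_contra hge
      have h1le : (1 : Δ) ≤ φ (v c) := le_of_not_gt hge
      exact absurd (Left.one_le_pow_of_le h1le n) (not_le_of_gt hφn)
    intro a hatn γ hγ
    obtain ⟨δ, hδm, hδφ⟩ := valueGroup_lift (⇑v) φ hφ.1 hγ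
    by_cases hva : v a = 0
    · refine ⟨1, ?_⟩
      simp only [hva, map_zero, pow_one]
      exact zero_lt_iff.mpr γ.ne_zero
    · have hlt1 : φ (v a) < 1 := key a hatn hva
      have hconv : ∀ h : Γ, φ h = 1 → v a * h < 1 :=
        (hφ.2 (v a) 1).mp (by rwa [map_one])
      obtain ⟨n, hn⟩ := hv a hatn δ hδm
      refine ⟨n + 1, ?_⟩
      show φ (v a) ^ (n + 1) < (γ : Δ)
      rw [← hδφ, ← map_pow, hφ.2]
      intro h hh
      have h1 : v a ^ n * (v a * h) < v a ^ n * 1 :=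
        mul_lt_mul_of_lt_of_le₀ (le_refl _) (pow_ne_zero n hva) (hconv h hh)
      rw [mul_one] at h1
      calc v a ^ (n + 1) * h = v a ^ n * (v a * h) := by rw [pow_succ, mul_assoc]
      _ < v a ^ n := h1
      _ < (δ : Γ) := hn
end
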